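/- Let N ≥ 2 be an integer, let ω = exp(2πi/N) viewed as an element of the circle S¹ ⊆ ℂ, and let s ∈ M_N(ℂ) be the cyclic shift matrix (s_{j,k} = 1 if k ≡ j + 1 mod N, else 0, indices 0, …, N−1). Let R = {f ∈ C(S¹, M_N(ℂ)) : f(ω z) = s f(z) s* for all z ∈ S¹}, a closed unital *-subalgebra of C(S¹, M_N(ℂ)). Then R is isomorphic, as a complex *-algebra, to C(S¹, M_N(ℂ)). -/

import Mathlib

noncomputable def tcChi (N : ℕ) (t : ℤ) : ℂ := Complex.exp (2 * Real.pi * Complex.I * t / N)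

lemma tcChi_add (N : ℕ) (a b : ℤ) : tcChi N (a + b) = tcChi N a * tcChi N b := by
  rw [tcChi, tcChi, tcChi, ← Complex.exp_add]
  congr 1; push_cast; ring

lemma tcChi_zero (N : ℕ) : tcChi N 0 = 1 := by simp [tcChi]

lemma tcChi_neg_mul (N : ℕ) (t : ℤ) : tcChi N (-t) * tcChi N t = 1 := by
  rw [← tcChi_add]; simp [tcChi_zero]

lemma tcChi_nat_mul (N : ℕ) (m : ℕ) (t : ℤ) : tcChi N (t * m) = tcChi N t ^ m := by
  induction m with
  | zero => simp [tcChi_zero]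
  | succ k ih => rw [pow_succ, ← ih, ← tcChi_add]; congr 1; push_cast; ring

lemma tcChi_eq_one_iff {N : ℕ} (hN : 0 < N) {t : ℤ} : tcChi N t = 1 ↔ (N : ℤ) ∣ t := by
  have hNC : (N : ℂ) ≠ 0 := Nat.cast_ne_zero.2 hN.ne'
  have hπ : (Real.pi : ℂ) ≠ 0 := by exact_mod_cast Real.pi_ne_zero
  have h2 : (2 : ℂ) * Real.pi * Complex.I ≠ 0 := by
    simp [Complex.I_ne_zero, hπ]
  rw [tcChi, Complex.exp_eq_one_iff]
  constructor
  · rintro ⟨n, hn⟩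
    refine ⟨n, ?_⟩
    have hc : (t : ℂ) = (((N : ℤ) * n : ℤ) : ℂ) := by
      push_cast
      field_simp at hn
      rw [mul_comm ((N:ℂ)) (n:ℂ)]
      apply mul_left_cancel₀ h2
      rw [hn]; ring
    exact_mod_cast hc
  · rintro ⟨c, rfl⟩
    refine ⟨c, ?_⟩
    field_simp
    push_cast; ring

lemma tcChi_sum {N : ℕ} (hN : 0 < N) (t : ℤ) :
    ∑ m : Fin N, tcChi N (t * m) = if (N : ℤ) ∣ t then (N : ℂ) else 0 := by
  have h1 : ∑ m : Fin N, tcChi N (t * m) = ∑ m ∈ Finset.range N, tcChi N t ^ m := by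
    rw [Fin.sum_univ_eq_sum_range (fun m => tcChi N (t * (m : ℕ)))]
    exact Finset.sum_congr rfl fun m _ => tcChi_nat_mul N m t
  rw [h1]
  split_ifs with h
  · rw [(tcChi_eq_one_iff hN).2 h]; simp
  · have hne : tcChi N t ≠ 1 := fun hc => h ((tcChi_eq_one_iff hN).1 hc)
    rw [geom_sum_eq hne]
    have hpow : tcChi N t ^ N = 1 := by
      rw [← tcChi_nat_mul, mul_comm]
      exact (tcChi_eq_one_iff hN).2 ⟨t, rfl⟩
    rw [hpow]; simp
lemma tcChi_conj (N : ℕ) (t : ℤ) : (starRingEnd ℂ) (tcChi N t) = tcChi N (-t) := by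
  rw [tcChi, tcChi, ← Complex.exp_conj]
  congr 1
  simp [map_div₀, Complex.conj_I, map_ofNat]

noncomputable def tcSig (N : ℕ) (w : Circle) : Matrix (Fin N) (Fin N) ℂ :=
  Matrix.of fun j k => (N : ℂ)⁻¹ * ∑ m : Fin N, tcChi N (((j : ℤ) - k) * m) * (w : ℂ) ^ (m : ℕ)

lemma tcSig_continuous (N : ℕ) : Continuous fun w => tcSig N w := by
  apply continuous_matrix
  intro j k
  simp only [tcSig, Matrix.of_apply]
  exact continuous_const.mul (continuous_finset_sum _ fun m _ =>
    continuous_const.mul ((continuous_subtype_val.pow _)))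

lemma tcSig_star (N : ℕ) (w : Circle) : star (tcSig N w) = tcSig N w⁻¹ := by
  ext j k
  simp only [Matrix.star_apply, tcSig, Matrix.of_apply]
  rw [star_mul', star_sum, star_inv₀]
  congr 1
  · simp
  · apply Finset.sum_congr rfl
    intro m _
    rw [star_mul', star_pow]
    have h1 : (star (w : ℂ)) = ((w⁻¹ : Circle) : ℂ) := by
      rw [Circle.coe_inv_eq_conj]; rfl
    have h2 : star (tcChi N (((k : ℤ) - j) * m)) = tcChi N (((j : ℤ) - k) * m) := by
      rw [RCLike.star_def, tcChi_conj]
      congr 1; ring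
    rw [h1, h2, mul_comm]

lemma tc_c_eq_zero {N : ℕ} {c : ℤ} (h1 : -(N:ℤ) < N * c) (h2 : N * c < N) : c = 0 := by
  have hexp1 : (N:ℤ) * (c + 1) = N * c + N := by ring
  have hexp2 : (N:ℤ) * (c - 1) = N * c - N := by ring
  rcases lt_trichotomy c 0 with h | h | h
  · have := mul_nonpos_of_nonneg_of_nonpos (Int.natCast_nonneg N) (by omega : c + 1 ≤ 0)
    linarith
  · exact h
  · have := mul_nonneg (Int.natCast_nonneg N) (by omega : (0:ℤ) ≤ c - 1)
    linarith

lemma tc_dvd_iff {N : ℕ} (j k : Fin N) : (N:ℤ) ∣ ((k:ℤ) - j) ↔ k = j := by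
  have hjz : (j:ℤ) < N := by exact_mod_cast j.isLt
  have hkz : (k:ℤ) < N := by exact_mod_cast k.isLt
  have hj0 : (0:ℤ) ≤ j := Int.natCast_nonneg _
  have hk0 : (0:ℤ) ≤ k := Int.natCast_nonneg _
  constructor
  · rintro ⟨c, hc⟩
    have hc0 : c = 0 := tc_c_eq_zero (N := N) (by linarith) (by linarith)
    rw [hc0] at hc
    apply Fin.ext
    omega
  · rintro rfl
    simp

lemma tc_dvd_shift_iff {N : ℕ} (hN : 0 < N) (j k : Fin N) :
    (N:ℤ) ∣ ((j:ℤ) - k + 1) ↔ (k : ℕ) = ((j : ℕ) + 1) % N := by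
  have hj := j.isLt
  have hk := k.isLt
  have hjz : (j:ℤ) < N := by exact_mod_cast hj
  have hkz : (k:ℤ) < N := by exact_mod_cast hk
  have hj0 : (0:ℤ) ≤ j := Int.natCast_nonneg _
  have hk0 : (0:ℤ) ≤ k := Int.natCast_nonneg _
  have hNz : (0:ℤ) < N := by exact_mod_cast hN
  constructor
  · rintro ⟨c, hc⟩
    have hexp1 : (N:ℤ) * (c + 1) = N * c + N := by ring
    have hexp2 : (N:ℤ) * (c - 2) = N * c - 2*N := by ring
    have h0 : 0 ≤ c := by
      by_contra h
      have := mul_nonpos_of_nonneg_of_nonpos (Int.natCast_nonneg N) (by omega : c + 1 ≤ 0)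
      linarith
    have h1 : c ≤ 1 := by
      by_contra h
      have := mul_nonneg (Int.natCast_nonneg N) (by omega : (0:ℤ) ≤ c - 2)
      linarith
    interval_cases c
    · rw [mul_zero] at hc
      have hlt : (j : ℕ) + 1 < N := by omega
      rw [Nat.mod_eq_of_lt hlt]
      omega
    · rw [mul_one] at hc
      have hjeq : (j : ℕ) + 1 = N := by omega
      rw [hjeq, Nat.mod_self]
      omega
  · intro h
    rcases Nat.lt_or_ge ((j:ℕ) + 1) N with hlt | hge
    · rw [Nat.mod_eq_of_lt hlt] at h
      exact ⟨0, by omega⟩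
    · have hjeq : (j : ℕ) + 1 = N := by omega
      rw [hjeq, Nat.mod_self] at h
      exact ⟨1, by omega⟩

lemma tcSig_one {N : ℕ} (hN : 0 < N) : tcSig N 1 = 1 := by
  have hNC : (N : ℂ) ≠ 0 := Nat.cast_ne_zero.2 hN.ne'
  ext j k
  simp only [tcSig, Matrix.of_apply]
  have h1 : ∀ m : Fin N, tcChi N (((j : ℤ) - k) * m) * ((1 : Circle) : ℂ) ^ (m : ℕ)
      = tcChi N (((j : ℤ) - k) * m) := by
    intro m; simp
  rw [Finset.sum_congr rfl fun m _ => h1 m, tcChi_sum hN]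
  rcases eq_or_ne j k with rfl | hjk
  · simp [Matrix.one_apply, inv_mul_cancel₀ hNC]
  · have hnd : ¬ (N:ℤ) ∣ ((j:ℤ) - k) := fun hdvd => hjk ((tc_dvd_iff k j).1 hdvd)
    rw [if_neg hnd]
    simp [Matrix.one_apply, hjk]

lemma tcOmega_coe {N : ℕ} : ((Circle.exp (2 * Real.pi / N) : Circle) : ℂ) = tcChi N 1 := by
  rw [Circle.coe_exp, tcChi]
  congr 1
  push_cast
  ring

lemma tcOmega_pow {N : ℕ} (m : ℕ) :
    ((Circle.exp (2 * Real.pi / N) : Circle) : ℂ) ^ m = tcChi N m := by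
  rw [tcOmega_coe]
  rw [show ((m : ℤ)) = 1 * m by ring, tcChi_nat_mul]

lemma tcSig_omega {N : ℕ} (hN : 0 < N) :
    tcSig N (Circle.exp (2 * Real.pi / N)) =
      Matrix.of fun j k : Fin N => if (k : ℕ) = ((j : ℕ) + 1) % N then (1:ℂ) else 0 := by
  have hNC : (N : ℂ) ≠ 0 := Nat.cast_ne_zero.2 hN.ne'
  ext j k
  simp only [tcSig, Matrix.of_apply]
  have h1 : ∀ m : Fin N,
      tcChi N (((j : ℤ) - k) * m) * ((Circle.exp (2 * Real.pi / N) : Circle) : ℂ) ^ (m : ℕ)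
      = tcChi N (((j : ℤ) - k + 1) * m) := by
    intro m
    rw [tcOmega_pow, ← tcChi_add]
    congr 1
    ring
  rw [Finset.sum_congr rfl fun m _ => h1 m, tcChi_sum hN]
  rcases eq_or_ne ((k : ℕ)) (((j : ℕ) + 1) % N) with h | h
  · rw [if_pos ((tc_dvd_shift_iff hN j k).2 h), if_pos h, inv_mul_cancel₀ hNC]
  · rw [if_neg (fun hd => h ((tc_dvd_shift_iff hN j k).1 hd)), if_neg h, mul_zero]

lemma tcSig_mul {N : ℕ} (hN : 0 < N) (w w' : Circle) :
    tcSig N w * tcSig N w' = tcSig N (w * w') := by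
  have hNC : (N : ℂ) ≠ 0 := Nat.cast_ne_zero.2 hN.ne'
  ext j k
  simp only [Matrix.mul_apply, tcSig, Matrix.of_apply]
  -- expand each product of sums into a double sum with constant pulled out
  have step1 : ∀ l : Fin N,
      ((N : ℂ)⁻¹ * ∑ m : Fin N, tcChi N (((j : ℤ) - l) * m) * (w : ℂ) ^ (m : ℕ)) *
      ((N : ℂ)⁻¹ * ∑ n : Fin N, tcChi N (((l : ℤ) - k) * n) * (w' : ℂ) ^ (n : ℕ)) =
      ∑ m : Fin N, ∑ n : Fin N, (N : ℂ)⁻¹ * (N : ℂ)⁻¹ *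
        (tcChi N (((j : ℤ) - l) * m) * (w : ℂ) ^ (m : ℕ) *
         (tcChi N (((l : ℤ) - k) * n) * (w' : ℂ) ^ (n : ℕ))) := by
    intro l
    rw [mul_mul_mul_comm, Finset.sum_mul_sum]
    rw [Finset.mul_sum]
    exact Finset.sum_congr rfl fun m _ => by rw [Finset.mul_sum]
  rw [Finset.sum_congr rfl fun l _ => step1 l]
  rw [Finset.sum_comm]
  rw [Finset.sum_congr rfl fun m _ => Finset.sum_comm]
  -- now  ∑ m ∑ n ∑ l ...
  have step2 : ∀ m n : Fin N,
      (∑ l : Fin N, (N : ℂ)⁻¹ * (N : ℂ)⁻¹ *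
        (tcChi N (((j : ℤ) - l) * m) * (w : ℂ) ^ (m : ℕ) *
         (tcChi N (((l : ℤ) - k) * n) * (w' : ℂ) ^ (n : ℕ)))) =
      (N : ℂ)⁻¹ * (N : ℂ)⁻¹ *
        (tcChi N (((j : ℤ) - k) * m) * tcChi N (-(((n : ℤ) - m) * k)) *
          ((w : ℂ) ^ (m : ℕ) * (w' : ℂ) ^ (n : ℕ))) *
        (if (N : ℤ) ∣ ((n : ℤ) - m) then (N : ℂ) else 0) := by
    intro m n
    rw [← tcChi_sum hN ((n : ℤ) - m), Finset.mul_sum]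
    apply Finset.sum_congr rfl
    intro l _
    have harg : (((j : ℤ) - l) * m) + (((l : ℤ) - k) * n) =
        (((j : ℤ) - k) * m) + (-(((n : ℤ) - m) * k)) + (((n : ℤ) - m) * l) := by ring
    have hchi : tcChi N (((j : ℤ) - l) * m) * tcChi N (((l : ℤ) - k) * n) =
        tcChi N (((j : ℤ) - k) * m) * tcChi N (-(((n : ℤ) - m) * k)) *
          tcChi N (((n : ℤ) - m) * l) := by
      rw [← tcChi_add, harg, tcChi_add, tcChi_add]
    calc (N : ℂ)⁻¹ * (N : ℂ)⁻¹ *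
        (tcChi N (((j : ℤ) - l) * m) * (w : ℂ) ^ (m : ℕ) *
         (tcChi N (((l : ℤ) - k) * n) * (w' : ℂ) ^ (n : ℕ)))
        = (N : ℂ)⁻¹ * (N : ℂ)⁻¹ *
          ((tcChi N (((j : ℤ) - l) * m) * tcChi N (((l : ℤ) - k) * n)) *
            ((w : ℂ) ^ (m : ℕ) * (w' : ℂ) ^ (n : ℕ))) := by ring
      _ = (N : ℂ)⁻¹ * (N : ℂ)⁻¹ *
        (tcChi N (((j : ℤ) - k) * m) * tcChi N (-(((n : ℤ) - m) * k)) *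
          ((w : ℂ) ^ (m : ℕ) * (w' : ℂ) ^ (n : ℕ))) * tcChi N (((n : ℤ) - m) * l) := by
          rw [hchi]; ring
  rw [Finset.sum_congr rfl fun m _ => Finset.sum_congr rfl fun n _ => step2 m n]
  -- collapse the inner sum over n using the Kronecker delta
  have step3 : ∀ m : Fin N, (∑ n : Fin N,
      (N : ℂ)⁻¹ * (N : ℂ)⁻¹ *
        (tcChi N (((j : ℤ) - k) * m) * tcChi N (-(((n : ℤ) - m) * k)) *
          ((w : ℂ) ^ (m : ℕ) * (w' : ℂ) ^ (n : ℕ))) *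
        (if (N : ℤ) ∣ ((n : ℤ) - m) then (N : ℂ) else 0)) =
      (N : ℂ)⁻¹ * (tcChi N (((j : ℤ) - k) * m) * ((w * w' : Circle) : ℂ) ^ (m : ℕ)) := by
    intro m
    have hsummand : ∀ n : Fin N,
        (N : ℂ)⁻¹ * (N : ℂ)⁻¹ *
          (tcChi N (((j : ℤ) - k) * m) * tcChi N (-(((n : ℤ) - m) * k)) *
            ((w : ℂ) ^ (m : ℕ) * (w' : ℂ) ^ (n : ℕ))) *
          (if (N : ℤ) ∣ ((n : ℤ) - m) then (N : ℂ) else 0) =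
        if n = m then (N : ℂ)⁻¹ * (tcChi N (((j : ℤ) - k) * m) *
            ((w : ℂ) ^ (m : ℕ) * (w' : ℂ) ^ (m : ℕ))) else 0 := by
      intro n
      rcases eq_or_ne n m with h | hnm
      · subst h
        rw [if_pos ((tc_dvd_iff n n).2 rfl), if_pos rfl]
        have : (-(((n : ℤ) - n) * k)) = 0 := by ring
        rw [this, tcChi_zero]
        field_simp
      · rw [if_neg (fun hd => hnm ((tc_dvd_iff m n).1 hd)), if_neg hnm, mul_zero]
    rw [Finset.sum_congr rfl fun n _ => hsummand n, Finset.sum_ite_eq' Finset.univ m _]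
    rw [if_pos (Finset.mem_univ m)]
    rw [← mul_pow]
    norm_cast
  rw [Finset.sum_congr rfl fun m _ => step3 m, ← Finset.mul_sum]

lemma tcExp_nat_pow (x : ℝ) (n : ℕ) : Circle.exp x ^ n = Circle.exp (n * x) := by
  induction n with
  | zero => simp
  | succ k ih =>
    rw [pow_succ, ih, ← Circle.exp_add]
    congr 1
    push_cast
    ring

lemma tcExp_zpow (x : ℝ) (n : ℤ) : Circle.exp x ^ n = Circle.exp (n * x) := by
  induction n using Int.induction_on with
  | zero => simp
  | succ k ih =>
    rw [zpow_add_one, ih, ← Circle.exp_add]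
    congr 1
    push_cast
    ring
  | pred k ih =>
    rw [zpow_sub_one, ih, ← Circle.exp_neg, ← Circle.exp_add]
    congr 1
    push_cast
    ring

lemma tcOmega_pow_N {N : ℕ} (hN : 0 < N) : Circle.exp (2 * Real.pi / N) ^ N = 1 := by
  rw [tcExp_nat_pow]
  have : (N : ℝ) * (2 * Real.pi / N) = 2 * Real.pi := by
    field_simp
  rw [this, Circle.exp_two_pi]

lemma tcPow_surjective {N : ℕ} (hN : 0 < N) : Function.Surjective (fun w : Circle => w ^ N) := by
  intro z
  refine ⟨Circle.exp (Complex.arg z / N), ?_⟩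
  show Circle.exp (Complex.arg z / N) ^ N = z
  rw [tcExp_nat_pow]
  have : (N : ℝ) * (Complex.arg z / N) = Complex.arg z := by
    field_simp
  rw [this, Circle.exp_arg]

lemma tcRoot_of_unity {N : ℕ} (hN : 0 < N) (u : Circle) (hu : u ^ N = 1) :
    ∃ k : ℤ, u = Circle.exp (2 * Real.pi / N) ^ k := by
  obtain ⟨t, rfl⟩ : ∃ t : ℝ, Circle.exp t = u := ⟨Complex.arg u, Circle.exp_arg u⟩
  rw [tcExp_nat_pow, Circle.exp_eq_one] at hu
  obtain ⟨n, hn⟩ := hu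
  refine ⟨n, ?_⟩
  rw [tcExp_zpow]
  congr 1
  have hNR : (N : ℝ) ≠ 0 := Nat.cast_ne_zero.2 hN.ne'
  field_simp at hn ⊢
  linarith

lemma tcSig_inv_mul {N : ℕ} (hN : 0 < N) (w : Circle) :
    tcSig N w⁻¹ * tcSig N w = 1 := by
  rw [tcSig_mul hN, inv_mul_cancel, tcSig_one hN]

lemma tcSig_mul_inv {N : ℕ} (hN : 0 < N) (w : Circle) :
    tcSig N w * tcSig N w⁻¹ = 1 := by
  rw [tcSig_mul hN, mul_inv_cancel, tcSig_one hN]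

/-- Let `N ≥ 2`, `ω = exp(2πi/N) ∈ S¹`, `s` the cyclic shift matrix in `M_N(ℂ)`, and
`R = {f ∈ C(S¹, M_N(ℂ)) : f(ωz) = s f(z) s* for all z}`.  Then `R` is isomorphic, as a
complex *-algebra, to `C(S¹, M_N(ℂ))`: there is a map `Φ` which restricts to a bijection
from `R` onto `C(S¹, M_N(ℂ))` preserving the unit, addition, multiplication, scalar
multiplication and the adjoint. -/
theorem twisted_circle_algebra_iso (N : ℕ) (hN : 2 ≤ N) :
    let ω : Circle := Circle.exp (2 * Real.pi / N)
    let s : Matrix (Fin N) (Fin N) ℂ :=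
      Matrix.of fun j k => if (k : ℕ) = ((j : ℕ) + 1) % N then 1 else 0
    let R : Set C(Circle, Matrix (Fin N) (Fin N) ℂ) :=
      {f | ∀ z : Circle, f (ω * z) = s * f z * star s}
    ∃ Φ : C(Circle, Matrix (Fin N) (Fin N) ℂ) → C(Circle, Matrix (Fin N) (Fin N) ℂ),
      Set.InjOn Φ R ∧
      Φ '' R = Set.univ ∧
      Φ 1 = 1 ∧
      (∀ f ∈ R, ∀ g ∈ R, Φ (f + g) = Φ f + Φ g) ∧
      (∀ f ∈ R, ∀ g ∈ R, Φ (f * g) = Φ f * Φ g) ∧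
      (∀ f ∈ R, ∀ μ : ℂ, Φ (μ • f) = μ • Φ f) ∧
      (∀ f ∈ R, Φ (star f) = star (Φ f)) := by

  intro ω s R
  classical
  have hN0 : 0 < N := by omega
  have hsig_s : tcSig N ω = s := tcSig_omega hN0
  have hstar : ∀ w : Circle, star (tcSig N w) = tcSig N w⁻¹ := tcSig_star N
  have hss : ∀ w w' : Circle, tcSig N w * tcSig N w' = tcSig N (w * w') := tcSig_mul hN0
  have hωN : ω ^ N = 1 := tcOmega_pow_N hN0
  -- the inverse isomorphism Ψ
  set Ψ : C(Circle, Matrix (Fin N) (Fin N) ℂ) → C(Circle, Matrix (Fin N) (Fin N) ℂ) :=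
    fun g => ⟨fun w => tcSig N w * g (w ^ N) * tcSig N w⁻¹,
      ((tcSig_continuous N).mul (g.continuous.comp (continuous_pow N))).mul
        ((tcSig_continuous N).comp continuous_inv)⟩ with hΨdef
  have hΨapp : ∀ g w, Ψ g w = tcSig N w * g (w ^ N) * tcSig N w⁻¹ := fun _ _ => rfl
  -- every Ψ g lies in R
  have hmemR : ∀ g, Ψ g ∈ R := by
    intro g z
    rw [hΨapp, hΨapp]
    have e1 : (ω * z) ^ N = z ^ N := by rw [mul_pow, hωN, one_mul]
    have e2 : tcSig N (ω * z) = s * tcSig N z := by rw [← hsig_s, hss]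
    have e3 : tcSig N (ω * z)⁻¹ = tcSig N z⁻¹ * star s := by
      rw [← hsig_s, hstar, hss]
      congr 1
      group
    rw [e1, e2, e3]
    simp only [mul_assoc]
  -- Ψ is injective
  have hcancel : ∀ (w : Circle) (A B : Matrix (Fin N) (Fin N) ℂ),
      tcSig N w * A * tcSig N w⁻¹ = tcSig N w * B * tcSig N w⁻¹ → A = B := by
    intro w A B h
    have h2 := congrArg (fun X => tcSig N w⁻¹ * X * tcSig N w) h
    simpa only [mul_assoc, ← mul_assoc (tcSig N w⁻¹), tcSig_inv_mul hN0, one_mul,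
      tcSig_inv_mul hN0, mul_one] using h2
  have hinj : Function.Injective Ψ := by
    intro g g' h
    apply ContinuousMap.ext
    intro z
    obtain ⟨w, hw⟩ := tcPow_surjective hN0 z
    have hw' : w ^ N = z := hw
    have hval : Ψ g w = Ψ g' w := by rw [h]
    rw [hΨapp, hΨapp] at hval
    have := hcancel w _ _ hval
    rw [← hw']
    exact this
  -- Ψ is surjective onto R
  have hR_sub : ∀ f ∈ R, ∃ g, Ψ g = f := by
    intro f hf
    set h : Circle → Matrix (Fin N) (Fin N) ℂ :=
      fun w => tcSig N w⁻¹ * f w * tcSig N w with hh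
    have hcont_h : Continuous h :=
      (((tcSig_continuous N).comp continuous_inv).mul f.continuous).mul (tcSig_continuous N)
    have hstep : ∀ w, h (ω * w) = h w := by
      intro w
      have e1 : (ω * w)⁻¹ * ω = w⁻¹ := by group
      have e2 : ω⁻¹ * (ω * w) = w := by group
      calc h (ω * w)
          = (tcSig N (ω * w)⁻¹ * tcSig N ω) * f w * (tcSig N ω⁻¹ * tcSig N (ω * w)) := by
            rw [hh]
            simp only []
            rw [hf w, ← hsig_s, hstar]
            simp only [mul_assoc]
        _ = h w := by
            rw [hss, hss, e1, e2, hh]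
    have hk : ∀ (k : ℤ) (w : Circle), h (ω ^ k * w) = h w := by
      intro k
      induction k using Int.induction_on with
      | zero => intro w; simp
      | succ n ih =>
        intro w
        have e : ω ^ ((n : ℤ) + 1) * w = ω * (ω ^ (n : ℤ) * w) := by
          rw [zpow_add_one]; group
        rw [e, hstep, ih]
      | pred n ih =>
        intro w
        calc h (ω ^ (-(n : ℤ) - 1) * w)
            = h (ω * (ω ^ (-(n : ℤ) - 1) * w)) := (hstep _).symm
          _ = h (ω ^ (-(n : ℤ)) * w) := by
              rw [show ω * (ω ^ (-(n : ℤ) - 1) * w) = ω ^ (-(n : ℤ)) * w by group]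
          _ = h w := ih w
    have hroots : ∀ w w' : Circle, w ^ N = w' ^ N → h w = h w' := by
      intro w w' hww
      have hu : (w' * w⁻¹) ^ N = 1 := by
        rw [mul_pow, inv_pow, ← hww, mul_inv_cancel]
      obtain ⟨k, hk'⟩ := tcRoot_of_unity hN0 _ hu
      have e : w' = ω ^ k * w := by rw [← hk']; group
      rw [e, hk]
    choose rt hrt using tcPow_surjective hN0
    set g0 : Circle → Matrix (Fin N) (Fin N) ℂ := fun z => h (rt z) with hg0def
    have hg0 : ∀ w, g0 (w ^ N) = h w := by
      intro w
      apply hroots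
      exact hrt (w ^ N)
    have hcg : Continuous g0 := by
      have hq : Topology.IsQuotientMap (fun w : Circle => w ^ N) :=
        IsClosedMap.isQuotientMap ((continuous_pow N).isClosedMap) (continuous_pow N)
          (tcPow_surjective hN0)
      rw [hq.continuous_iff]
      have e : (g0 ∘ fun w : Circle => w ^ N) = h := funext hg0
      rw [e]
      exact hcont_h
    refine ⟨⟨g0, hcg⟩, ?_⟩
    apply ContinuousMap.ext
    intro w
    rw [hΨapp]
    show tcSig N w * g0 (w ^ N) * tcSig N w⁻¹ = f w
    rw [hg0 w, hh]
    simp only []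
    calc tcSig N w * (tcSig N w⁻¹ * f w * tcSig N w) * tcSig N w⁻¹
        = (tcSig N w * tcSig N w⁻¹) * f w * (tcSig N w * tcSig N w⁻¹) := by
          simp only [mul_assoc]
      _ = f w := by rw [tcSig_mul_inv hN0, one_mul, mul_one]
  -- definition of Φ
  set Φ : C(Circle, Matrix (Fin N) (Fin N) ℂ) → C(Circle, Matrix (Fin N) (Fin N) ℂ) :=
    fun f => if hex : ∃ g, Ψ g = f then hex.choose else f with hΦdef
  have hΦΨ : ∀ g, Φ (Ψ g) = g := by
    intro g
    have hex : ∃ g', Ψ g' = Ψ g := ⟨g, rfl⟩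
    rw [hΦdef]
    simp only [dif_pos hex]
    exact hinj hex.choose_spec
  have hΨΦ : ∀ f ∈ R, Ψ (Φ f) = f := by
    intro f hfR
    have hex : ∃ g, Ψ g = f := hR_sub f hfR
    rw [hΦdef]
    simp only [dif_pos hex]
    exact hex.choose_spec
  -- algebraic properties of Ψ
  have hΨ1 : Ψ 1 = 1 := by
    apply ContinuousMap.ext
    intro w
    rw [hΨapp]
    simp only [ContinuousMap.one_apply]
    rw [mul_one, tcSig_mul_inv hN0]
  have hΨadd : ∀ g g', Ψ (g + g') = Ψ g + Ψ g' := by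
    intro g g'
    apply ContinuousMap.ext
    intro w
    simp only [ContinuousMap.add_apply, hΨapp, mul_add, add_mul]
  have hΨmul : ∀ g g', Ψ (g * g') = Ψ g * Ψ g' := by
    intro g g'
    apply ContinuousMap.ext
    intro w
    simp only [ContinuousMap.mul_apply, hΨapp]
    calc tcSig N w * (g (w ^ N) * g' (w ^ N)) * tcSig N w⁻¹
        = tcSig N w * g (w ^ N) * (tcSig N w⁻¹ * tcSig N w) * g' (w ^ N) * tcSig N w⁻¹ := by
          rw [tcSig_inv_mul hN0]
          simp only [mul_assoc, one_mul]
      _ = tcSig N w * g (w ^ N) * tcSig N w⁻¹ * (tcSig N w * g' (w ^ N) * tcSig N w⁻¹) := by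
          simp only [mul_assoc]
  have hΨsmul : ∀ (g) (μ : ℂ), Ψ (μ • g) = μ • Ψ g := by
    intro g μ
    apply ContinuousMap.ext
    intro w
    simp only [ContinuousMap.smul_apply, hΨapp, mul_smul_comm, smul_mul_assoc]
  have hΨstar : ∀ g, Ψ (star g) = star (Ψ g) := by
    intro g
    apply ContinuousMap.ext
    intro w
    simp only [ContinuousMap.star_apply, hΨapp, star_mul, hstar, inv_inv]
    simp only [mul_assoc]
  -- conclusion
  refine ⟨Φ, ?_, ?_, ?_, ?_, ?_, ?_, ?_⟩
  · intro f hf f' hf' h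
    rw [← hΨΦ f hf, ← hΨΦ f' hf', h]
  · apply Set.eq_univ_of_forall
    intro g
    exact ⟨Ψ g, hmemR g, hΦΨ g⟩
  · conv_lhs => rw [← hΨ1]
    exact hΦΨ 1
  · intro f hf f' hf'
    have e : f + f' = Ψ (Φ f + Φ f') := by
      rw [hΨadd, hΨΦ f hf, hΨΦ f' hf']
    rw [e, hΦΨ]
  · intro f hf f' hf'
    have e : f * f' = Ψ (Φ f * Φ f') := by
      rw [hΨmul, hΨΦ f hf, hΨΦ f' hf']
    rw [e, hΦΨ]
  · intro f hf μ
    have e : μ • f = Ψ (μ • Φ f) := by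
      rw [hΨsmul, hΨΦ f hf]
    rw [e, hΦΨ]
  · intro f hf
    have e : star f = Ψ (star (Φ f)) := by
      rw [hΨstar, hΨΦ f hf]
    rw [e, hΦΨ]
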